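/- Let (𝔛, τ) be a quasi-Polish space with injection map F : 𝔛 → ℓ²(ℕ). Let σ : V → V (V = ℓ²(ℕ)) be continuous, with bounded range, satisfying the separating property. Then the set 𝔑_{F,σ}(𝔛) of quasi-Polish scalar neural networks x ↦ Σ_{j=1}^J ⟨φ_j, σ(A_j F(x) + b_j)⟩ (J ∈ ℕ, φ_j ∈ V', A_j ∈ ℒ(V), b_j ∈ V) is dense in C(𝔛) for the topology of uniform convergence on compact sets: for every continuous g : 𝔛 → ℝ, compact K ⊆ 𝔛, and ε > 0, there exists 𝒢 ∈ 𝔑_{F,σ}(𝔛) with sup_{x∈K} |𝒢(x) − g(x)| < ε. -/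

import Mathlib

set_option maxHeartbeats 1600000

open Filter Topology RealInnerProductSpace

noncomputable abbrev V2 := lp (fun _ : ℕ => ℝ) 2


lemma exists_functional (x y v : V2) (hv : v ∉ Submodule.span ℝ ({x, y} : Set V2)) :
    ∃ φ : V2 →L[ℝ] ℝ, φ v = 1 ∧ φ x = 0 ∧ φ y = 0 := by
  set W : Submodule ℝ V2 := Submodule.span ℝ ({x, y} : Set V2) with hW
  haveI : FiniteDimensional ℝ W := by
    apply FiniteDimensional.span_of_finite
    exact (Set.finite_singleton y).insert x
  haveI : CompleteSpace W := FiniteDimensional.complete ℝ W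
  set w : V2 := v - (W.orthogonalProjection v : V2) with hw
  have hwW : w ∈ Wᗮ := W.sub_starProjection_mem_orthogonal v
  rw [Submodule.mem_orthogonal'] at hwW
  have hw0 : w ≠ 0 := by
    intro h
    apply hv
    have h2 : v = (W.orthogonalProjection v : V2) := by
      have := sub_eq_zero.mp h; linear_combination (norm := module) this
    rw [h2]; exact (W.orthogonalProjection v).2
  have hnw : (0:ℝ) < ‖w‖^2 := pow_pos (norm_pos_iff.mpr hw0) 2
  refine ⟨(‖w‖^2)⁻¹ • innerSL ℝ w, ?_, ?_, ?_⟩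
  · have h1 : ⟪w, v⟫ = ‖w‖^2 := by
      have h2 : ⟪w, (W.orthogonalProjection v : V2)⟫ = 0 :=
        hwW _ (W.orthogonalProjection v).2
      have h3 : ⟪w, v⟫ = ⟪w, w⟫ + ⟪w, (W.orthogonalProjection v : V2)⟫ := by
        rw [← inner_add_right]; congr 1; rw [hw]; abel
      rw [h3, h2, real_inner_self_eq_norm_sq]; ring
    simp only [ContinuousLinearMap.smul_apply, innerSL_apply_apply, smul_eq_mul]
    rw [h1]; field_simp
  · have h1 : ⟪w, x⟫ = 0 := hwW _ (Submodule.subset_span (by simp))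
    simp [h1]
  · have h1 : ⟪w, y⟫ = 0 := hwW _ (Submodule.subset_span (by simp))
    simp [h1]


lemma exists_phi (σ : V2 → V2)
    (hσsep : ∃ ψ : V2 →L[ℝ] ℝ, ψ ≠ 0 ∧
      ∃ uP uM u0 : V2,
        (uP ∉ Submodule.span ℝ {u0, uM} ∨ uM ∉ Submodule.span ℝ {u0, uP}) ∧
        (∀ x, 0 < ψ x → Tendsto (fun lam : ℝ => σ (lam • x)) atTop (𝓝 uP)) ∧
        (∀ x, ψ x < 0 → Tendsto (fun lam : ℝ => σ (lam • x)) atTop (𝓝 uM)) ∧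
        (∀ x, ψ x = 0 → Tendsto (fun lam : ℝ => σ (lam • x)) atTop (𝓝 u0))) :
    ∃ (φ : V2 →L[ℝ] ℝ) (e : V2),
      Tendsto (fun u : ℝ => φ (σ (u • e))) atTop (𝓝 1) ∧
      Tendsto (fun u : ℝ => φ (σ (u • e))) atBot (𝓝 0) := by
  obtain ⟨ψ, hψ, uP, uM, u0, hspan, hP, hM, h0⟩ := hσsep
  obtain ⟨e₀, he₀⟩ : ∃ e₀, ψ e₀ ≠ 0 := by
    by_contra hctr
    push_neg at hctr
    exact hψ (ContinuousLinearMap.ext fun z => by simpa using hctr z)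
  have hbotcomp : ∀ (φ : V2 →L[ℝ] ℝ) (e : V2) (u : V2),
      Tendsto (fun lam : ℝ => σ (lam • (-e))) atTop (𝓝 u) →
      Tendsto (fun v : ℝ => φ (σ (v • e))) atBot (𝓝 (φ u)) := by
    intro φ e u hu
    have := ((φ.continuous.tendsto u).comp hu).comp tendsto_neg_atBot_atTop
    convert this using 2 with v
    simp [Function.comp, neg_smul_neg, neg_smul]
  rcases hspan with hsp | hsp
  · obtain ⟨φ, hφP, hφ0, hφM⟩ := exists_functional u0 uM uP hsp
    rcases lt_or_gt_of_ne he₀ with hneg | hpos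
    · refine ⟨φ, -e₀, ?_, ?_⟩
      · have h1 : Tendsto (fun lam : ℝ => σ (lam • (-e₀))) atTop (𝓝 uP) :=
          hP _ (by simpa using hneg)
        simpa [hφP, Function.comp_def] using (φ.continuous.tendsto uP).comp h1
      · have h1 : Tendsto (fun lam : ℝ => σ (lam • (- -e₀))) atTop (𝓝 uM) :=
          hM _ (by simpa using hneg)
        simpa [hφM] using hbotcomp φ (-e₀) uM h1
    · refine ⟨φ, e₀, ?_, ?_⟩
      · have h1 := hP _ hpos
        simpa [hφP, Function.comp_def] using (φ.continuous.tendsto uP).comp h1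
      · have h1 : Tendsto (fun lam : ℝ => σ (lam • (-e₀))) atTop (𝓝 uM) :=
          hM _ (by simpa using hpos)
        simpa [hφM] using hbotcomp φ e₀ uM h1
  · obtain ⟨φ, hφM, hφ0, hφP⟩ := exists_functional u0 uP uM hsp
    rcases lt_or_gt_of_ne he₀ with hneg | hpos
    · refine ⟨φ, e₀, ?_, ?_⟩
      · have h1 := hM _ hneg
        simpa [hφM, Function.comp_def] using (φ.continuous.tendsto uM).comp h1
      · have h1 : Tendsto (fun lam : ℝ => σ (lam • (-e₀))) atTop (𝓝 uP) :=
          hP _ (by simpa using hneg)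
        simpa [hφP] using hbotcomp φ e₀ uP h1
    · refine ⟨φ, -e₀, ?_, ?_⟩
      · have h1 : Tendsto (fun lam : ℝ => σ (lam • (-e₀))) atTop (𝓝 uM) :=
          hM _ (by simpa using hpos)
        simpa [hφM, Function.comp_def] using (φ.continuous.tendsto uM).comp h1
      · have h1 : Tendsto (fun lam : ℝ => σ (lam • (- -e₀))) atTop (𝓝 uP) :=
          hP _ (by simpa using hpos)
        simpa [hφP] using hbotcomp φ (-e₀) uP h1

lemma one_dim_approx (h : ℝ → ℝ) (C : ℝ) (hbd : ∀ u, |h u| ≤ C)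
    (htop : Tendsto h atTop (𝓝 1)) (hbot : Tendsto h atBot (𝓝 0))
    (χ : ℝ → ℝ) (hχ : Continuous χ) (M : ℝ) (hM : 0 < M) (ε : ℝ) (hε : 0 < ε) :
    ∃ (n : ℕ) (c a b : Fin n → ℝ), ∀ u ∈ Set.Icc (-M) M,
      |(∑ j, c j * h (a j * u + b j)) - χ u| < ε := by
  have hC0 : 0 ≤ C := le_trans (abs_nonneg _) (hbd 0)
  obtain ⟨B, hB⟩ :=
    (isCompact_Icc : IsCompact (Set.Icc (-M) M)).exists_bound_of_continuousOn hχ.continuousOn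
  have hmemL : (-M) ∈ Set.Icc (-M) M := Set.left_mem_Icc.mpr (by linarith)
  have hB0 : 0 ≤ B := le_trans (norm_nonneg _) (hB (-M) hmemL)
  set ε₁ : ℝ := ε / (2 * (C + 1)) with hε₁def
  have hε₁ : 0 < ε₁ := by positivity
  have hεC : (C + 1) * ε₁ = ε / 2 := by rw [hε₁def]; field_simp
  have huc := (isCompact_Icc : IsCompact (Set.Icc (-M) M)).uniformContinuousOn_of_continuous
    hχ.continuousOn
  rw [Metric.uniformContinuousOn_iff] at huc
  obtain ⟨δ, hδ0, hδ⟩ := huc ε₁ hε₁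
  have hmin : 0 < min δ 1 := lt_min hδ0 one_pos
  set n : ℕ := ⌈2 * M / min δ 1⌉₊ + 1 with hn
  have hn0 : (0:ℝ) < n := by positivity
  set s : ℝ := 2 * M / n with hs
  have hs0 : 0 < s := by positivity
  have hslt : s < min δ 1 := by
    have h1 : 2 * M / min δ 1 < (n : ℝ) := by
      refine lt_of_le_of_lt (Nat.le_ceil _) ?_
      rw [hn]; push_cast; linarith
    have h2 : 2 * M < (n : ℝ) * min δ 1 := (div_lt_iff₀ hmin).mp h1
    rw [hs, div_lt_iff₀ hn0]; linarith [mul_comm (n:ℝ) (min δ 1)]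
  have hsδ : s < δ := hslt.trans_le (min_le_left _ _)
  have hs1 : s < 1 := hslt.trans_le (min_le_right _ _)
  set t : ℕ → ℝ := fun k => -M + k * s with ht
  have htdef : ∀ k : ℕ, t k = -M + k * s := fun k => rfl
  have hns : (n:ℝ) * s = 2 * M := by rw [hs]; field_simp
  have ht0 : t 0 = -M := by rw [htdef]; simp
  have htn : t n = M := by rw [htdef, hns]; ring
  have htsucc : ∀ k : ℕ, t (k+1) = t k + s := by
    intro k; rw [htdef, htdef]; push_cast; ring
  have htmono : ∀ a b : ℕ, a ≤ b → t a ≤ t b := by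
    intro a b hab
    rw [htdef, htdef]
    have : (a:ℝ) ≤ b := by exact_mod_cast hab
    nlinarith
  have htmem : ∀ k, k ≤ n → t k ∈ Set.Icc (-M) M := by
    intro k hk
    constructor
    · rw [← ht0]; exact htmono 0 k (Nat.zero_le k)
    · rw [← htn]; exact htmono k n hk
  have hdist : ∀ {p q : ℝ}, p ∈ Set.Icc (-M) M → q ∈ Set.Icc (-M) M →
      |p - q| ≤ s → |χ p - χ q| ≤ ε₁ := by
    intro p q hp hq hpq
    have := hδ p hp q hq (by rw [Real.dist_eq]; exact lt_of_le_of_lt hpq hsδ)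
    rw [Real.dist_eq] at this; exact this.le
  -- choose η and the slope lam
  set D : ℝ := B + 4 * n * B + 1 with hD
  have hD0 : 0 < D := by positivity
  set η : ℝ := ε / (2 * D) with hηdef
  have hη : 0 < η := by positivity
  have hDη : D * η = ε / 2 := by rw [hηdef]; field_simp
  obtain ⟨R₁, hR₁⟩ : ∃ R₁ : ℝ, ∀ v ≥ R₁, |h v - 1| ≤ η := by
    have := (Metric.tendsto_nhds.mp htop) η hη
    rw [eventually_atTop] at this
    obtain ⟨R, hR⟩ := this
    exact ⟨R, fun v hv => le_of_lt (by simpa [Real.dist_eq] using hR v hv)⟩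
  obtain ⟨R₂, hR₂⟩ : ∃ R₂ : ℝ, ∀ v ≤ R₂, |h v| ≤ η := by
    have := (Metric.tendsto_nhds.mp hbot) η hη
    rw [eventually_atBot] at this
    obtain ⟨R, hR⟩ := this
    exact ⟨R, fun v hv => le_of_lt (by simpa [Real.dist_eq] using hR v hv)⟩
  set R₀ : ℝ := max R₁ (max (-R₂) 1) with hR₀
  have hR₀1 : (1:ℝ) ≤ R₀ := le_trans (le_max_right _ _) (le_max_right _ _)
  have hR₀0 : (0:ℝ) < R₀ := lt_of_lt_of_le one_pos hR₀1
  set lam : ℝ := 2 * R₀ / s with hlam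
  have hlam0 : 0 < lam := by positivity
  have hlams : lam * (s / 2) = R₀ := by rw [hlam]; field_simp
  have hlamR : R₀ ≤ lam := by
    rw [hlam, le_div_iff₀ hs0]; nlinarith
  have hhi : ∀ v : ℝ, R₀ ≤ v → |h v - 1| ≤ η := fun v hv =>
    hR₁ v (le_trans (le_max_left _ _) hv)
  have hlo : ∀ v : ℝ, v ≤ -R₀ → |h v| ≤ η := by
    intro v hv
    refine hR₂ v ?_
    have h1 : -R₂ ≤ R₀ := le_trans (le_max_left _ _) (le_max_right _ _)
    linarith
  have hfloor : ∀ u : ℝ, -M ≤ u → u ≤ M →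
      t (min n ⌊(u + M) / s⌋₊) ≤ u ∧ u ≤ t (min n ⌊(u + M) / s⌋₊) + s := by
    intro u huL huR
    constructor
    · have h0 : (0:ℝ) ≤ (u + M) / s := div_nonneg (by linarith) hs0.le
      have h1 : ((min n ⌊(u + M) / s⌋₊ : ℕ) : ℝ) ≤ (u + M) / s := by
        refine le_trans ?_ (Nat.floor_le h0)
        exact_mod_cast min_le_right n _
      have h2 : ((min n ⌊(u + M) / s⌋₊ : ℕ):ℝ) * s ≤ u + M := (le_div_iff₀ hs0).mp h1
      rw [htdef]; linarith
    · by_cases hcase : ⌊(u + M) / s⌋₊ < n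
      · have hj' : min n ⌊(u + M) / s⌋₊ = ⌊(u + M) / s⌋₊ := min_eq_right hcase.le
        have h2 : (u + M) / s < (⌊(u + M) / s⌋₊ : ℝ) + 1 := Nat.lt_floor_add_one _
        have h3 : u + M < ((⌊(u + M) / s⌋₊ : ℝ) + 1) * s := (div_lt_iff₀ hs0).mp h2
        rw [hj', htdef]
        nlinarith
      · have hj' : min n ⌊(u + M) / s⌋₊ = n := min_eq_left (le_of_not_gt hcase)
        rw [hj', htn]; linarith
  clear_value ε₁ n s t D η R₀ lam
  clear hn hs ht hηdef hR₀ hlam hε₁def hδ hR₁ hR₂ hδ0 hmin hslt hsδ huc htop hbot hχ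
  -- the main pointwise estimate
  have main : ∀ u ∈ Set.Icc (-M) M,
      |χ (t 0) * h (lam * (u + M + 1)) +
        (∑ k ∈ Finset.range n, (χ (t (k+1)) - χ (t k)) * h (lam * (u - (t (k+1) - s/2))))
        - χ u| < ε := by
    intro u hu
    obtain ⟨huL, huR⟩ := hu
    have humem : u ∈ Set.Icc (-M) M := ⟨huL, huR⟩
    obtain ⟨htj_le, hu_le⟩ := hfloor u huL huR
    set j : ℕ := min n ⌊(u + M) / s⌋₊ with hj
    have hjn : j ≤ n := min_le_left _ _
    clear_value j
    clear hj
    have htjmem : t j ∈ Set.Icc (-M) M := htmem j hjn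
    set H0 : ℝ := h (lam * (u + M + 1)) with hH0
    set Δ : ℕ → ℝ := fun k => χ (t (k+1)) - χ (t k) with hΔ
    set hterm : ℕ → ℝ := fun k => h (lam * (u - (t (k+1) - s/2))) with hhterm
    set A1 : ℝ := χ (t 0) * (H0 - 1) with hA1
    set A2 : ℝ := ∑ k ∈ Finset.range j, Δ k * (hterm k - 1) with hA2
    set A3 : ℝ := ∑ k ∈ Finset.Ico j n, Δ k * hterm k with hA3
    set A4 : ℝ := χ (t j) - χ u with hA4
    have hdecomp : χ (t 0) * H0 + (∑ k ∈ Finset.range n, Δ k * hterm k) - χ u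
        = A1 + A2 + A3 + A4 := by
      have hsplit : (∑ k ∈ Finset.range n, Δ k * hterm k)
          = (∑ k ∈ Finset.range j, Δ k * hterm k) + ∑ k ∈ Finset.Ico j n, Δ k * hterm k := by
        rw [Finset.range_eq_Ico, Finset.range_eq_Ico]
        exact (Finset.sum_Ico_consecutive (f := fun k => Δ k * hterm k) (Nat.zero_le j) hjn).symm
      have htel : (∑ k ∈ Finset.range j, Δ k) = χ (t j) - χ (t 0) :=
        Finset.sum_range_sub (fun k => χ (t k)) j
      have hA2' : A2 = (∑ k ∈ Finset.range j, Δ k * hterm k) - (χ (t j) - χ (t 0)) := by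
        rw [hA2, ← htel, ← Finset.sum_sub_distrib]
        exact Finset.sum_congr rfl fun k _ => by ring
      rw [hsplit, hA1, hA2', hA3, hA4]; ring
    have habsB : ∀ k, k ≤ n → |χ (t k)| ≤ B := by
      intro k hk
      have := hB (t k) (htmem k hk)
      rwa [Real.norm_eq_abs] at this
    have hΔbound : ∀ k, k < n → |Δ k| ≤ 2 * B := by
      intro k hk
      rw [hΔ]
      calc |χ (t (k+1)) - χ (t k)| ≤ |χ (t (k+1))| + |χ (t k)| := abs_sub _ _
        _ ≤ B + B := add_le_add (habsB _ hk) (habsB _ (le_of_lt hk))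
        _ = 2 * B := by ring
    have h2Bη : (0:ℝ) ≤ 2 * B * η := by nlinarith
    have bound1 : |A1| ≤ B * η := by
      rw [hA1, abs_mul]
      refine mul_le_mul (habsB 0 (Nat.zero_le n)) ?_ (abs_nonneg _) hB0
      refine hhi _ ?_
      have h1 : (1:ℝ) ≤ u + M + 1 := by linarith
      calc R₀ ≤ lam := hlamR
        _ = lam * 1 := by ring
        _ ≤ lam * (u + M + 1) := by nlinarith
    have bound2 : |A2| ≤ (n : ℝ) * (2 * B) * η := by
      rw [hA2]
      refine le_trans (Finset.abs_sum_le_sum_abs _ _) ?_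
      have hterm_bd : ∀ k ∈ Finset.range j, |Δ k * (hterm k - 1)| ≤ 2 * B * η := by
        intro k hk
        rw [Finset.mem_range] at hk
        rw [abs_mul]
        refine mul_le_mul (hΔbound k (lt_of_lt_of_le hk hjn)) ?_ (abs_nonneg _) (by linarith : (0:ℝ) ≤ 2 * B)
        refine hhi _ ?_
        have ht1 : t (k+1) ≤ t j := htmono (k+1) j hk
        have harg : s / 2 ≤ u - (t (k+1) - s/2) := by linarith
        calc R₀ = lam * (s/2) := hlams.symm
          _ ≤ lam * (u - (t (k+1) - s/2)) := by nlinarith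
      refine le_trans (Finset.sum_le_sum hterm_bd) ?_
      rw [Finset.sum_const, Finset.card_range, nsmul_eq_mul]
      have hjnR : (j:ℝ) ≤ (n:ℝ) := by exact_mod_cast hjn
      calc (j:ℝ) * (2 * B * η) ≤ (n:ℝ) * (2 * B * η) :=
            mul_le_mul_of_nonneg_right hjnR h2Bη
        _ = (n:ℝ) * (2 * B) * η := by ring
    have bound3 : |A3| ≤ ε₁ * C + (n:ℝ) * (2 * B) * η := by
      rcases eq_or_lt_of_le hjn with hjeq | hjlt
      · rw [hA3, hjeq, Finset.Ico_self, Finset.sum_empty, abs_zero]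
        have h1 : 0 ≤ ε₁ * C := mul_nonneg hε₁.le hC0
        have h2 : 0 ≤ (n:ℝ) * (2 * B) * η := by
          refine mul_nonneg (mul_nonneg hn0.le (by linarith)) hη.le
        linarith
      · rw [hA3, Finset.sum_eq_sum_Ico_succ_bot hjlt]
        refine le_trans (abs_add_le _ _) (add_le_add ?_ ?_)
        · rw [abs_mul]
          refine mul_le_mul ?_ (hbd _) (abs_nonneg _) hε₁.le
          rw [hΔ]
          refine hdist (htmem _ hjlt) htjmem ?_
          rw [htsucc j, abs_of_nonneg (by linarith)]
          linarith
        · refine le_trans (Finset.abs_sum_le_sum_abs _ _) ?_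
          have hterm_bd : ∀ k ∈ Finset.Ico (j+1) n, |Δ k * hterm k| ≤ 2 * B * η := by
            intro k hk
            rw [Finset.mem_Ico] at hk
            rw [abs_mul]
            refine mul_le_mul (hΔbound k hk.2) ?_ (abs_nonneg _) (by linarith : (0:ℝ) ≤ 2 * B)
            refine hlo _ ?_
            have ht1 : t (j+2) ≤ t (k+1) := htmono (j+2) (k+1) (by omega)
            have ht2 : t (j+2) = t j + s + s := by
              rw [show j+2 = (j+1)+1 from rfl, htsucc (j+1), htsucc j]
            have harg : u - (t (k+1) - s/2) ≤ -(s/2) := by linarith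
            calc lam * (u - (t (k+1) - s/2)) ≤ lam * (-(s/2)) := by nlinarith
              _ = -R₀ := by rw [← hlams]; ring
          refine le_trans (Finset.sum_le_sum hterm_bd) ?_
          rw [Finset.sum_const, nsmul_eq_mul]
          have hcard : ((Finset.Ico (j+1) n).card : ℝ) ≤ (n:ℝ) := by
            rw [Nat.card_Ico]; exact_mod_cast Nat.sub_le _ _
          calc ((Finset.Ico (j+1) n).card : ℝ) * (2 * B * η)
              ≤ (n:ℝ) * (2 * B * η) := mul_le_mul_of_nonneg_right hcard h2Bη
            _ = (n:ℝ) * (2 * B) * η := by ring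
    have bound4 : |A4| ≤ ε₁ := by
      rw [hA4]
      refine hdist htjmem humem ?_
      rw [abs_of_nonpos (by linarith)]; linarith
    calc |χ (t 0) * H0 + (∑ k ∈ Finset.range n, Δ k * hterm k) - χ u|
        = |A1 + A2 + A3 + A4| := by rw [hdecomp]
      _ ≤ |A1| + |A2| + |A3| + |A4| := by
          refine le_trans (abs_add_le _ _) (add_le_add (le_trans (abs_add_le _ _)
            (add_le_add (abs_add_le _ _) (le_refl _))) (le_refl _))
      _ ≤ B * η + (n:ℝ) * (2 * B) * η + (ε₁ * C + (n:ℝ) * (2 * B) * η) + ε₁ := by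
          exact add_le_add (add_le_add (add_le_add bound1 bound2) bound3) bound4
      _ = (D - 1) * η + (C + 1) * ε₁ := by rw [hD]; ring
      _ = ε / 2 - η + ε / 2 := by linear_combination hDη + hεC
      _ < ε := by linarith
  -- package into Fin (n+1) indexed data
  refine ⟨n + 1, Fin.cases (χ (t 0)) (fun k : Fin n => χ (t ((k:ℕ)+1)) - χ (t (k:ℕ))),
      fun _ => lam,
      Fin.cases (lam * (M + 1)) (fun k : Fin n => -lam * (t ((k:ℕ)+1) - s/2)), ?_⟩
  intro u hu
  have hmain := main u hu
  rw [Fin.sum_univ_succ]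
  simp only [Fin.cases_zero, Fin.cases_succ]
  have harg0 : lam * u + lam * (M + 1) = lam * (u + M + 1) := by ring
  have hsum : (∑ i : Fin n, (χ (t ((i:ℕ)+1)) - χ (t (i:ℕ))) * h (lam * u + -lam * (t ((i:ℕ)+1) - s/2)))
      = ∑ k ∈ Finset.range n, (χ (t (k+1)) - χ (t k)) * h (lam * (u - (t (k+1) - s/2))) := by
    rw [Fin.sum_univ_eq_sum_range (fun k => (χ (t (k+1)) - χ (t k)) * h (lam * u + -lam * (t (k+1) - s/2)))]
    refine Finset.sum_congr rfl fun k _ => ?_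
    rw [show lam * u + -lam * (t (k+1) - s/2) = lam * (u - (t (k+1) - s/2)) from by ring]
  rw [harg0, hsum]
  exact hmain

theorem quasiPolish_scalar_UAT_main {X : Type*} [TopologicalSpace X]
    (f : ℕ → X → ℝ)
    (hcont : ∀ i, Continuous (f i))
    (hrange : ∀ (i : ℕ) (x : X), f i x ∈ Set.Icc (0 : ℝ) (1 / (↑i + 1)))
    (hsep : ∀ x y : X, x ≠ y → ∃ i, f i x ≠ f i y)
    (F : X → lp (fun _ : ℕ => ℝ) 2)
    (hF : ∀ x i, F x i = f i x) (hFcont : Continuous F)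
    (σ : lp (fun _ : ℕ => ℝ) 2 → lp (fun _ : ℕ => ℝ) 2)
    (hσcont : Continuous σ)
    (hσbdd : Bornology.IsBounded (Set.range σ))
    (φ : lp (fun _ : ℕ => ℝ) 2 →L[ℝ] ℝ) (e : lp (fun _ : ℕ => ℝ) 2)
    (htop : Tendsto (fun u : ℝ => φ (σ (u • e))) atTop (𝓝 1))
    (hbot : Tendsto (fun u : ℝ => φ (σ (u • e))) atBot (𝓝 0))
    (one_dim : ∀ (h : ℝ → ℝ) (C : ℝ), (∀ u, |h u| ≤ C) →
      Tendsto h atTop (𝓝 1) → Tendsto h atBot (𝓝 0) →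
      ∀ (χ : ℝ → ℝ), Continuous χ → ∀ (M : ℝ), 0 < M → ∀ (ε : ℝ), 0 < ε →
      ∃ (n : ℕ) (c a b : Fin n → ℝ), ∀ u ∈ Set.Icc (-M) M,
        |(∑ j, c j * h (a j * u + b j)) - χ u| < ε) :
    ∀ (g : X → ℝ), Continuous g → ∀ K : Set X, IsCompact K → ∀ ε : ℝ, 0 < ε →
      ∃ (J : ℕ) (φJ : Fin J → (lp (fun _ : ℕ => ℝ) 2 →L[ℝ] ℝ))
        (A : Fin J → (lp (fun _ : ℕ => ℝ) 2 →L[ℝ] lp (fun _ : ℕ => ℝ) 2))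
        (b : Fin J → lp (fun _ : ℕ => ℝ) 2),
        ∀ x ∈ K, |(∑ j, φJ j (σ (A j (F x) + b j))) - g x| < ε := by
  intro g hg K hK ε hε
  -- the scalar activation profile
  set h : ℝ → ℝ := fun u => φ (σ (u • e)) with hhdef
  obtain ⟨Cσ, hCσ⟩ := hσbdd.exists_norm_le
  have hhb : ∀ u, |h u| ≤ ‖φ‖ * Cσ := by
    intro u
    rw [hhdef]
    calc |φ (σ (u • e))| = ‖φ (σ (u • e))‖ := (Real.norm_eq_abs _).symm
      _ ≤ ‖φ‖ * ‖σ (u • e)‖ := φ.le_opNorm _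
      _ ≤ ‖φ‖ * Cσ := by
          have := hCσ (σ (u • e)) ⟨u • e, rfl⟩
          exact mul_le_mul_of_nonneg_left this (norm_nonneg _)
  -- Hausdorff structure
  have hFinj : Function.Injective F := by
    intro x y hxy
    by_contra hne
    obtain ⟨i, hi⟩ := hsep x y hne
    apply hi
    rw [← hF x i, ← hF y i, hxy]
  haveI : T2Space X := T2Space.of_injective_continuous hFinj hFcont
  haveI : CompactSpace ↥K := isCompact_iff_compactSpace.mp hK
  -- the trigonometric subalgebra on K
  have hmkc : ∀ p : (lp (fun _ : ℕ => ℝ) 2) × ℝ,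
      Continuous (fun x : ↥K => Real.cos (⟪p.1, F ↑x⟫ + p.2)) := by
    intro p
    exact Real.continuous_cos.comp
      ((Continuous.inner continuous_const (hFcont.comp continuous_subtype_val)).add
        continuous_const)
  set mkcos : (lp (fun _ : ℕ => ℝ) 2) × ℝ → C(↥K, ℝ) :=
    fun p => ⟨fun x => Real.cos (⟪p.1, F ↑x⟫ + p.2), hmkc p⟩ with hmk
  have hmkapp : ∀ p x, mkcos p x = Real.cos (⟪p.1, F ↑x⟫ + p.2) := fun p x => rfl
  set S : Set C(↥K, ℝ) := Set.range mkcos with hS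
  set P : Submodule ℝ C(↥K, ℝ) := Submodule.span ℝ S with hP
  have hmul_key : ∀ p q : (lp (fun _ : ℕ => ℝ) 2) × ℝ,
      (mkcos p) * (mkcos q) =
        (1/2 : ℝ) • mkcos (p.1 + q.1, p.2 + q.2) + (1/2 : ℝ) • mkcos (p.1 - q.1, p.2 - q.2) := by
    intro p q
    ext x
    show Real.cos (⟪p.1, F ↑x⟫ + p.2) * Real.cos (⟪q.1, F ↑x⟫ + q.2)
        = (1/2 : ℝ) * Real.cos (⟪p.1 + q.1, F ↑x⟫ + (p.2 + q.2))
          + (1/2 : ℝ) * Real.cos (⟪p.1 - q.1, F ↑x⟫ + (p.2 - q.2))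
    have h1 : ⟪p.1 + q.1, F ↑x⟫ + (p.2 + q.2) = (⟪p.1, F ↑x⟫ + p.2) + (⟪q.1, F ↑x⟫ + q.2) := by
      rw [inner_add_left]; ring
    have h2 : ⟪p.1 - q.1, F ↑x⟫ + (p.2 - q.2) = (⟪p.1, F ↑x⟫ + p.2) - (⟪q.1, F ↑x⟫ + q.2) := by
      rw [inner_sub_left]; ring
    have key : ∀ A B : ℝ, Real.cos A * Real.cos B
        = (1/2 : ℝ) * Real.cos (A + B) + (1/2 : ℝ) * Real.cos (A - B) := by
      intro A B
      rw [Real.cos_add, Real.cos_sub]; ring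
    rw [h1, h2]
    exact key _ _
  have hone : (1 : C(↥K, ℝ)) ∈ P := by
    have : (1 : C(↥K, ℝ)) = mkcos (0, 0) := by
      ext x
      simp [hmkapp, inner_zero_left]
    rw [this]
    exact Submodule.subset_span ⟨(0,0), rfl⟩
  have hmulmem : ∀ x y : C(↥K, ℝ), x ∈ P → y ∈ P → x * y ∈ P := by
    have hPP : P * P ≤ P := by
      rw [hP, Submodule.span_mul_span]
      refine Submodule.span_le.mpr ?_
      rintro _ ⟨a, ⟨pa, rfl⟩, b, ⟨pb, rfl⟩, rfl⟩
      have hmem : (1/2 : ℝ) • mkcos (pa.1 + pb.1, pa.2 + pb.2)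
          + (1/2 : ℝ) • mkcos (pa.1 - pb.1, pa.2 - pb.2) ∈ Submodule.span ℝ S :=
        Submodule.add_mem _
          (Submodule.smul_mem _ _ (Submodule.subset_span ⟨_, rfl⟩))
          (Submodule.smul_mem _ _ (Submodule.subset_span ⟨_, rfl⟩))
      rw [← hmul_key pa pb] at hmem
      exact hmem
    exact fun x y hx hy => hPP (Submodule.mul_mem_mul hx hy)
  set Alg : Subalgebra ℝ C(↥K, ℝ) := P.toSubalgebra hone hmulmem with hAlg
  have hsepA : Alg.SeparatesPoints := by
    intro x y hxy
    have hxyX : (x : X) ≠ (y : X) := Subtype.coe_ne_coe.mpr hxy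
    have hFne : F ↑x ≠ F ↑y := fun hc => hxyX (hFinj hc)
    set w : lp (fun _ : ℕ => ℝ) 2 := F ↑x - F ↑y with hw
    have hw0 : w ≠ 0 := sub_ne_zero.mpr hFne
    set α : ℝ := ⟪w, F ↑x⟫ with hα
    set β : ℝ := ⟪w, F ↑y⟫ with hβ
    have hαβ : α ≠ β := by
      have : α - β = ‖w‖^2 := by
        rw [hα, hβ, ← inner_sub_right, ← hw, real_inner_self_eq_norm_sq]
      have hpos : (0:ℝ) < ‖w‖^2 := pow_pos (norm_pos_iff.mpr hw0) 2
      intro hc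
      rw [hc] at this
      simp at this
      linarith
    set s₀ : ℝ := (Real.pi / 2) / (|α| + |β| + 1) with hs₀
    have hs₀pos : 0 < s₀ := by
      have := Real.pi_pos
      have h1 : 0 < |α| + |β| + 1 := by positivity
      positivity
    have hs₀sum : s₀ * (|α| + |β| + 1) = Real.pi / 2 := by
      rw [hs₀, div_mul_cancel₀]
      positivity
    have hproj : ∀ γ : ℝ, |γ| ≤ |α| + |β| → s₀ * γ + Real.pi/2 ∈ Set.Icc 0 Real.pi := by
      intro γ hγ
      have h1 : |s₀ * γ| < Real.pi / 2 := by
        rw [abs_mul, abs_of_pos hs₀pos]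
        calc s₀ * |γ| ≤ s₀ * (|α| + |β|) := by nlinarith [abs_nonneg γ]
          _ < s₀ * (|α| + |β| + 1) := by nlinarith
          _ = Real.pi / 2 := hs₀sum
      rw [abs_lt] at h1
      constructor <;> [linarith; linarith]
    have hmemα : s₀ * α + Real.pi/2 ∈ Set.Icc 0 Real.pi :=
      hproj α (by nlinarith [abs_nonneg β])
    have hmemβ : s₀ * β + Real.pi/2 ∈ Set.Icc 0 Real.pi :=
      hproj β (by nlinarith [abs_nonneg α])
    refine ⟨(mkcos (s₀ • w, Real.pi/2) : C(↥K, ℝ)),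
      ⟨mkcos (s₀ • w, Real.pi/2), Submodule.subset_span ⟨_, rfl⟩, rfl⟩, ?_⟩
    simp only [hmkapp]
    have hin : ∀ v : lp (fun _ : ℕ => ℝ) 2, ⟪s₀ • w, v⟫ = s₀ * ⟪w, v⟫ := by
      intro v; rw [real_inner_smul_left]
    rw [hin, hin, ← hα, ← hβ]
    intro hc
    have := Real.injOn_cos hmemα hmemβ hc
    have hne : s₀ * α ≠ s₀ * β := fun hcc => hαβ (mul_left_cancel₀ hs₀pos.ne' hcc)
    apply hne
    linarith
  -- Stone-Weierstrass
  obtain ⟨q, hq⟩ := ContinuousMap.exists_mem_subalgebra_near_continuous_of_separatesPoints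
    Alg hsepA (fun x : ↥K => g ↑x) (hg.comp continuous_subtype_val) (ε/2) (half_pos hε)
  have hqmem : (q : C(↥K, ℝ)) ∈ P := q.2
  obtain ⟨m, cc, vv, hsum⟩ := Submodule.mem_span_set'.mp hqmem
  have hvS : ∀ i : Fin m, ∃ p, mkcos p = (vv i : C(↥K, ℝ)) := fun i => (vv i).2
  choose pz hpz using hvS
  -- per-term bounds on the inner products over K
  have hbnd : ∀ i : Fin m, ∃ Mi : ℝ, 0 < Mi ∧ ∀ x ∈ K, |⟪(pz i).1, F x⟫| ≤ Mi := by
    intro i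
    obtain ⟨Mi, hMi⟩ := hK.exists_bound_of_continuousOn
      (f := fun t : X => (⟪(pz i).1, F t⟫ : ℝ))
      ((Continuous.inner continuous_const hFcont).continuousOn)
    refine ⟨max Mi 1, lt_of_lt_of_le one_pos (le_max_right _ _), fun x hx => ?_⟩
    have := hMi x hx
    rw [Real.norm_eq_abs] at this
    exact le_trans this (le_max_left _ _)
  choose Mv hMvpos hMv using hbnd
  -- apply one-dimensional approximation to each cosine ridge term
  have happrox : ∀ i : Fin m, ∃ (n : ℕ) (c a b : Fin n → ℝ),
      ∀ u ∈ Set.Icc (-(Mv i)) (Mv i),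
        |(∑ j, c j * h (a j * u + b j)) - Real.cos (u + (pz i).2)| <
          ε / (2 * (m+1) * (|cc i| + 1)) := by
    intro i
    refine one_dim h (‖φ‖ * Cσ) hhb htop hbot (fun u => Real.cos (u + (pz i).2))
      (Real.continuous_cos.comp (continuous_id.add continuous_const)) (Mv i) (hMvpos i) _ ?_
    have h1 : (0:ℝ) < |cc i| + 1 := by positivity
    have h2 : (0:ℝ) < (m:ℝ) + 1 := by positivity
    positivity
  choose nn ci ai bi hi using happrox
  -- assemble the network
  set T := (Σ i : Fin m, Fin (nn i)) with hT
  set eqv : T ≃ Fin (Fintype.card T) := Fintype.equivFin T with heqv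
  refine ⟨Fintype.card T,
    fun j => (cc (eqv.symm j).1 * ci (eqv.symm j).1 (eqv.symm j).2) • φ,
    fun j => ContinuousLinearMap.smulRight
      ((ai (eqv.symm j).1 (eqv.symm j).2) • innerSL ℝ (pz (eqv.symm j).1).1) e,
    fun j => (bi (eqv.symm j).1 (eqv.symm j).2) • e, ?_⟩
  intro x hx
  -- rewrite the network sum as a double sum of ridge terms
  have hnet : (∑ j, ((cc (eqv.symm j).1 * ci (eqv.symm j).1 (eqv.symm j).2) • φ)
        (σ ((ContinuousLinearMap.smulRight
          ((ai (eqv.symm j).1 (eqv.symm j).2) • innerSL ℝ (pz (eqv.symm j).1).1) e) (F x)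
          + (bi (eqv.symm j).1 (eqv.symm j).2) • e)))
      = ∑ i : Fin m, cc i * ∑ j : Fin (nn i),
          ci i j * h (ai i j * ⟪(pz i).1, F x⟫ + bi i j) := by
    have hterm : ∀ (τ : T),
        ((cc τ.1 * ci τ.1 τ.2) • φ)
          (σ ((ContinuousLinearMap.smulRight ((ai τ.1 τ.2) • innerSL ℝ (pz τ.1).1) e) (F x)
            + (bi τ.1 τ.2) • e))
        = cc τ.1 * (ci τ.1 τ.2 * h (ai τ.1 τ.2 * ⟪(pz τ.1).1, F x⟫ + bi τ.1 τ.2)) := by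
      intro τ
      have harg : (ContinuousLinearMap.smulRight ((ai τ.1 τ.2) • innerSL ℝ (pz τ.1).1) e) (F x)
          + (bi τ.1 τ.2) • e
          = (ai τ.1 τ.2 * ⟪(pz τ.1).1, F x⟫ + bi τ.1 τ.2) • e := by
        simp only [ContinuousLinearMap.smulRight_apply, ContinuousLinearMap.smul_apply,
          innerSL_apply_apply, smul_smul, smul_eq_mul, add_smul]
      rw [harg]
      simp only [ContinuousLinearMap.smul_apply, smul_eq_mul, hhdef]
      ring
    calc (∑ j, ((cc (eqv.symm j).1 * ci (eqv.symm j).1 (eqv.symm j).2) • φ)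
          (σ ((ContinuousLinearMap.smulRight
            ((ai (eqv.symm j).1 (eqv.symm j).2) • innerSL ℝ (pz (eqv.symm j).1).1) e) (F x)
            + (bi (eqv.symm j).1 (eqv.symm j).2) • e)))
        = ∑ τ : T, ((cc τ.1 * ci τ.1 τ.2) • φ)
            (σ ((ContinuousLinearMap.smulRight ((ai τ.1 τ.2) • innerSL ℝ (pz τ.1).1) e) (F x)
              + (bi τ.1 τ.2) • e)) := by
          exact Fintype.sum_bijective eqv.symm eqv.symm.bijective _ _ (fun j => rfl)
      _ = ∑ τ : T, cc τ.1 * (ci τ.1 τ.2 * h (ai τ.1 τ.2 * ⟪(pz τ.1).1, F x⟫ + bi τ.1 τ.2)) := by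
          exact Finset.sum_congr rfl fun τ _ => hterm τ
      _ = ∑ i : Fin m, ∑ j : Fin (nn i),
            cc i * (ci i j * h (ai i j * ⟪(pz i).1, F x⟫ + bi i j)) := by
          rw [← Finset.univ_sigma_univ, Finset.sum_sigma]
      _ = ∑ i : Fin m, cc i * ∑ j : Fin (nn i),
            ci i j * h (ai i j * ⟪(pz i).1, F x⟫ + bi i j) := by
          exact Finset.sum_congr rfl fun i _ => (Finset.mul_sum _ _ _).symm
  rw [hnet]
  -- compare with q, then with g
  have hqx : (q : C(↥K, ℝ)) ⟨x, hx⟩ = ∑ i : Fin m, cc i * (mkcos (pz i)) ⟨x, hx⟩ := by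
    rw [← hsum]
    rw [ContinuousMap.coe_sum]
    rw [Finset.sum_apply]
    refine Finset.sum_congr rfl fun i _ => ?_
    rw [ContinuousMap.coe_smul, Pi.smul_apply, smul_eq_mul, hpz i]
  have hterm_err : ∀ i : Fin m,
      |(∑ j : Fin (nn i), ci i j * h (ai i j * ⟪(pz i).1, F x⟫ + bi i j))
        - (mkcos (pz i)) ⟨x, hx⟩| < ε / (2 * (m+1) * (|cc i| + 1)) := by
    intro i
    have hu : ⟪(pz i).1, F x⟫ ∈ Set.Icc (-(Mv i)) (Mv i) := abs_le.mp (hMv i x hx)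
    have h1 := hi i _ hu
    rw [hmkapp]
    exact h1
  have hεm : ∀ i : Fin m, |cc i| * (ε / (2 * (m+1) * (|cc i| + 1))) ≤ ε / (2 * (m+1)) := by
    intro i
    have h1 : (0:ℝ) < |cc i| + 1 := by positivity
    have h2 : (0:ℝ) < 2 * ((m:ℝ)+1) := by positivity
    have h3 : ε / (2 * ((m:ℝ)+1) * (|cc i| + 1)) = (ε / (2 * ((m:ℝ)+1))) / (|cc i| + 1) := by
      rw [div_div]
    rw [h3]
    calc |cc i| * (ε / (2 * ((m:ℝ)+1)) / (|cc i| + 1))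
        ≤ (|cc i| + 1) * (ε / (2 * ((m:ℝ)+1)) / (|cc i| + 1)) := by
          refine mul_le_mul_of_nonneg_right (by linarith [abs_nonneg (cc i)]) ?_
          positivity
      _ = ε / (2 * ((m:ℝ)+1)) := by
          rw [mul_comm, div_mul_cancel₀ _ h1.ne']
  have hq2 := hq ⟨x, hx⟩
  rw [Real.norm_eq_abs] at hq2
  have key1 : |(∑ i : Fin m, cc i * ∑ j : Fin (nn i),
        ci i j * h (ai i j * ⟪(pz i).1, F x⟫ + bi i j)) - (q : C(↥K, ℝ)) ⟨x, hx⟩|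
      ≤ (m:ℝ) * (ε / (2 * ((m:ℝ)+1))) := by
    rw [hqx, ← Finset.sum_sub_distrib]
    have hre : ∀ i ∈ Finset.univ, cc i * (∑ j : Fin (nn i),
          ci i j * h (ai i j * ⟪(pz i).1, F x⟫ + bi i j)) - cc i * (mkcos (pz i)) ⟨x, hx⟩
        = cc i * ((∑ j : Fin (nn i), ci i j * h (ai i j * ⟪(pz i).1, F x⟫ + bi i j))
            - (mkcos (pz i)) ⟨x, hx⟩) := fun i _ => by ring
    rw [Finset.sum_congr rfl hre]
    refine le_trans (Finset.abs_sum_le_sum_abs _ _) ?_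
    have hb : ∀ i ∈ Finset.univ, |cc i * ((∑ j : Fin (nn i),
          ci i j * h (ai i j * ⟪(pz i).1, F x⟫ + bi i j)) - (mkcos (pz i)) ⟨x, hx⟩)|
        ≤ ε / (2 * ((m:ℝ)+1)) := by
      intro i _
      rw [abs_mul]
      exact le_trans (mul_le_mul_of_nonneg_left (le_of_lt (hterm_err i)) (abs_nonneg _)) (hεm i)
    refine le_trans (Finset.sum_le_sum hb) ?_
    rw [Finset.sum_const, Finset.card_univ, Fintype.card_fin, nsmul_eq_mul]
  have hmm : (m:ℝ) * (ε / (2 * ((m:ℝ)+1))) ≤ ε / 2 := by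
    have h2 : (0:ℝ) < 2 * ((m:ℝ)+1) := by positivity
    have h3 : (m:ℝ) * (ε / (2 * ((m:ℝ)+1))) = ε * m / (2 * ((m:ℝ)+1)) := by ring
    rw [h3, div_le_iff₀ h2]
    nlinarith [hε.le, (Nat.cast_nonneg m : (0:ℝ) ≤ (m:ℝ))]
  calc |(∑ i : Fin m, cc i * ∑ j : Fin (nn i),
        ci i j * h (ai i j * ⟪(pz i).1, F x⟫ + bi i j)) - g x|
      ≤ |(∑ i : Fin m, cc i * ∑ j : Fin (nn i),
          ci i j * h (ai i j * ⟪(pz i).1, F x⟫ + bi i j)) - (q : C(↥K, ℝ)) ⟨x, hx⟩|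
        + |(q : C(↥K, ℝ)) ⟨x, hx⟩ - g x| := abs_sub_le _ _ _
    _ < (m:ℝ) * (ε / (2 * ((m:ℝ)+1))) + ε / 2 := by
        have := hq2
        exact add_lt_add_of_le_of_lt key1 this
    _ ≤ ε / 2 + ε / 2 := by linarith [hmm]
    _ = ε := by ring

open scoped Topology

/-- Universal approximation for quasi-Polish scalar neural networks: if `X` is
quasi-Polish with injection `F : X → ℓ²(ℕ)` and the activation `σ : V → V`
(`V = ℓ²(ℕ)`) is continuous with bounded range and satisfies the separating
property, then networks `x ↦ ∑ⱼ ⟨φⱼ, σ(Aⱼ F x + bⱼ)⟩` are dense in `C(X)` for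
uniform convergence on compacts. -/
theorem quasiPolish_scalar_UAT {X : Type*} [TopologicalSpace X]
    (f : ℕ → X → ℝ)
    (hcont : ∀ i, Continuous (f i))
    (hrange : ∀ (i : ℕ) (x : X), f i x ∈ Set.Icc (0 : ℝ) (1 / (↑i + 1)))
    (hsep : ∀ x y : X, x ≠ y → ∃ i, f i x ≠ f i y)
    (F : X → lp (fun _ : ℕ => ℝ) 2)
    (hF : ∀ x i, F x i = f i x) (hFcont : Continuous F)
    (σ : lp (fun _ : ℕ => ℝ) 2 → lp (fun _ : ℕ => ℝ) 2)
    (hσcont : Continuous σ)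
    (hσbdd : Bornology.IsBounded (Set.range σ))
    (hσsep : ∃ ψ : lp (fun _ : ℕ => ℝ) 2 →L[ℝ] ℝ, ψ ≠ 0 ∧
      ∃ uP uM u0 : lp (fun _ : ℕ => ℝ) 2,
        (uP ∉ Submodule.span ℝ {u0, uM} ∨ uM ∉ Submodule.span ℝ {u0, uP}) ∧
        (∀ x, 0 < ψ x →
          Filter.Tendsto (fun lam : ℝ => σ (lam • x)) Filter.atTop (𝓝 uP)) ∧
        (∀ x, ψ x < 0 →
          Filter.Tendsto (fun lam : ℝ => σ (lam • x)) Filter.atTop (𝓝 uM)) ∧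
        (∀ x, ψ x = 0 →
          Filter.Tendsto (fun lam : ℝ => σ (lam • x)) Filter.atTop (𝓝 u0))) :
    ∀ (g : X → ℝ), Continuous g → ∀ K : Set X, IsCompact K → ∀ ε : ℝ, 0 < ε →
      ∃ (J : ℕ) (φ : Fin J → (lp (fun _ : ℕ => ℝ) 2 →L[ℝ] ℝ))
        (A : Fin J → (lp (fun _ : ℕ => ℝ) 2 →L[ℝ] lp (fun _ : ℕ => ℝ) 2))
        (b : Fin J → lp (fun _ : ℕ => ℝ) 2),
        ∀ x ∈ K, |(∑ j, φ j (σ (A j (F x) + b j))) - g x| < ε := by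
  obtain ⟨φ, e, htop, hbot⟩ := exists_phi σ hσsep
  exact quasiPolish_scalar_UAT_main f hcont hrange hsep F hF hFcont σ hσcont hσbdd
    φ e htop hbot one_dim_approx
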